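/- arXiv:2012.01664 — 3 statements merged into one kernel-verified Lean document; each statement's English description precedes it below -/
import Mathlib

section
/- Let H' and H be connected graphs with H' a subgraph of H (on a subset of the vertices of H). Then diam(H) ≤ diam(H') + 2·lp(H[V \ V(H')]) + 2, where lp denotes the length (number of edges) of a longest path and H[V \ V(H')] is the graph obtained from H by deleting all vertices of H' and all edges incident to them. -/
/-- The length (number of edges) of a longest simple path in a graph. -/
noncomputable def SimpleGraph.longestPath {V : Type*} (G : SimpleGraph V) : ℕ :=
  sSup {n | ∃ (u v : V) (p : G.Walk u v), p.IsPath ∧ p.length = n}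

lemma length_le_longestPath {W : Type*} [Fintype W] (G : SimpleGraph W) {u v : W}
    (p : G.Walk u v) (hp : p.IsPath) : p.length ≤ G.longestPath := by
  apply le_csSup
  · exact ⟨Fintype.card W, fun n ⟨a, b, q, hq, hn⟩ => hn ▸ hq.length_lt.le⟩
  · exact ⟨u, v, p, hp, rfl⟩

lemma key_walk {V : Type*} (H : SimpleGraph V) (hH : H.Connected) (s : Set V) :
    ∀ {v u0 : V} (p : H.Walk v u0), p.IsPath → u0 ∈ s → ∀ (hv : v ∈ sᶜ),
    ∃ (x w : V) (hx : x ∈ sᶜ) (q : (H.induce sᶜ).Walk ⟨v, hv⟩ ⟨x, hx⟩),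
      q.IsPath ∧ w ∈ s ∧ H.Adj x w ∧ H.dist v w ≤ q.length + 1 ∧
      ∀ y ∈ q.support, (y : V) ∈ p.support := by
  intro v u0 p
  induction p with
  | nil =>
    intro _ hu0 hv
    exact absurd hu0 hv
  | @cons v b u0 h p' ih =>
    intro hp hu0 hv
    by_cases hb : b ∈ s
    · refine ⟨v, b, hv, SimpleGraph.Walk.nil, SimpleGraph.Walk.IsPath.nil, hb, h, ?_, ?_⟩
      · simpa using SimpleGraph.dist_le h.toWalk
      · intro y hy
        simp only [SimpleGraph.Walk.support_nil, List.mem_singleton] at hy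
        subst hy
        exact SimpleGraph.Walk.start_mem_support _
    · have hb' : b ∈ sᶜ := hb
      obtain ⟨x, w, hx, q', hq', hw, hadj, hdist, hsupp⟩ := ih hp.of_cons hu0 hb'
      have hadjΓ : (H.induce sᶜ).Adj ⟨v, hv⟩ ⟨b, hb'⟩ := h
      refine ⟨x, w, hx, SimpleGraph.Walk.cons hadjΓ q', ?_, hw, hadj, ?_, ?_⟩
      · rw [SimpleGraph.Walk.cons_isPath_iff]
        refine ⟨hq', fun hmem => ?_⟩
        have := hsupp _ hmem
        exact ((SimpleGraph.Walk.cons_isPath_iff _ _).mp hp).2 this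
      · calc H.dist v w ≤ H.dist v b + H.dist b w := hH.dist_triangle
          _ ≤ 1 + (q'.length + 1) := by
              gcongr
              · simpa using SimpleGraph.dist_le h.toWalk
          _ = (SimpleGraph.Walk.cons hadjΓ q').length + 1 := by
              simp [SimpleGraph.Walk.length_cons]; ring
      · intro y hy
        rw [SimpleGraph.Walk.support_cons, List.mem_cons] at hy
        rcases hy with hy | hy
        · subst hy
          exact SimpleGraph.Walk.start_mem_support _
        · rw [SimpleGraph.Walk.support_cons]
          exact List.mem_cons_of_mem _ (hsupp _ hy)

lemma close_to_verts {V : Type*} [Fintype V] (H : SimpleGraph V) (H' : H.Subgraph)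
    (hH : H.Connected) (hH' : H'.coe.Connected) (v : V) :
    ∃ w ∈ H'.verts, H.dist v w ≤ (SimpleGraph.induce H'.vertsᶜ H).longestPath + 1 := by
  by_cases hv : v ∈ H'.verts
  · exact ⟨v, hv, by rw [SimpleGraph.dist_self]; exact Nat.zero_le _⟩
  · classical
    obtain ⟨u0⟩ := hH'.nonempty
    obtain ⟨p⟩ := hH v u0.val
    obtain ⟨x, w, hx, q, hq, hw, hadj, hdist, -⟩ :=
      key_walk H hH H'.verts p.bypass p.bypass_isPath u0.property hv
    refine ⟨w, hw, hdist.trans ?_⟩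
    haveI : Fintype ↥(H'.vertsᶜ) := Fintype.ofFinite _
    have := length_le_longestPath (SimpleGraph.induce H'.vertsᶜ H) q hq
    omega

/-- If `H'` is a connected subgraph of the connected graph `H`, then
`diam H ≤ diam H' + 2 · lp(H[V \ V(H')]) + 2`. -/
theorem stmt_1 {V : Type*} [Fintype V] (H : SimpleGraph V) (H' : H.Subgraph)
    (hH : H.Connected) (hH' : H'.coe.Connected) :
    H.diam ≤ H'.coe.diam + 2 * (SimpleGraph.induce H'.vertsᶜ H).longestPath + 2 := by
  haveI : Nonempty V := hH.nonempty
  obtain ⟨u, v, huv⟩ := SimpleGraph.exists_dist_eq_diam (G := H)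
  rw [← huv]
  obtain ⟨w1, hw1, d1⟩ := close_to_verts H H' hH hH' u
  obtain ⟨w2, hw2, d2⟩ := close_to_verts H H' hH hH' v
  haveI : Nonempty ↥H'.verts := hH'.nonempty
  -- distance in H between w1 and w2 is at most the distance in H'.coe, which is ≤ diam
  have hdist12 : H.dist w1 w2 ≤ H'.coe.diam := by
    obtain ⟨p, hp⟩ := hH'.exists_walk_length_eq_dist ⟨w1, hw1⟩ ⟨w2, hw2⟩
    have h1 : H.dist w1 w2 ≤ H'.coe.dist ⟨w1, hw1⟩ ⟨w2, hw2⟩ := by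
      have := SimpleGraph.dist_le (p.map H'.hom)
      rwa [SimpleGraph.Walk.length_map, hp] at this
    have h2 : H'.coe.ediam ≠ ⊤ := by
      obtain ⟨a, b, hab⟩ := SimpleGraph.exists_edist_eq_ediam_of_finite (G := H'.coe)
      rw [← hab]
      exact SimpleGraph.edist_ne_top_iff_reachable.mpr (hH' a b)
    exact h1.trans (SimpleGraph.dist_le_diam h2)
  have t1 : H.dist u v ≤ H.dist u w2 + H.dist w2 v := hH.dist_triangle
  have t2 : H.dist u w2 ≤ H.dist u w1 + H.dist w1 w2 := hH.dist_triangle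
  have t3 : H.dist w2 v = H.dist v w2 := SimpleGraph.dist_comm
  omega
end

section
/- Let G be a connected graph with excess q (i.e., |E(G)| = |V(G)| - 1 + q), and suppose G has a spanning tree T of height at most h (from some root). Then every simple path in G has length at most 2h(q+1) + q. -/
/-- In a connected graph of excess `q` admitting a spanning tree of height at most `h`,
every simple path has length at most `2h(q+1) + q`. -/
theorem stmt_2 {V : Type*} [Fintype V] (G : SimpleGraph V) (hG : G.Connected)
    (q h : ℕ)
    (hq : (Set.toFinite G.edgeSet).toFinset.card = Fintype.card V - 1 + q)
    (T : G.Subgraph) (hspan : T.IsSpanning) (htree : T.coe.IsTree) (r : V)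
    (hheight : ∀ v : V, T.coe.dist ⟨r, hspan r⟩ ⟨v, hspan v⟩ ≤ h) :
    ∀ ⦃u v : V⦄ (p : G.Walk u v), p.IsPath → p.length ≤ 2 * h * (q + 1) + q := by
  classical
  -- edges of spanningCoe
  have hEdge : ∀ e, e ∈ T.spanningCoe.edgeSet ↔ e ∈ T.edgeSet := by
    intro e
    induction e using Sym2.ind with
    | _ a b => exact Iff.rfl
  -- tree segment bound
  have treeBound : ∀ (u v : V) (p : G.Walk u v), p.IsPath →
      (∀ e ∈ p.edges, e ∈ T.edgeSet) → p.length ≤ 2 * h := by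
    intro u v p hp hall
    let iso := T.spanningCoeEquivCoeOfSpanning hspan
    let p₁ := p.transfer T.spanningCoe (fun e he => (hEdge e).mpr (hall e he))
    have hp₁ : p₁.IsPath := hp.transfer _
    let p₂ := p₁.map iso.toHom
    have hp₂ : p₂.IsPath := p₁.map_isPath_of_injective iso.injective hp₁
    have hlen : p₂.length = p.length := by
      simp [p₂, p₁, SimpleGraph.Walk.length_map, SimpleGraph.Walk.length_transfer]
    obtain ⟨w, hw⟩ := htree.isConnected.exists_walk_length_eq_dist ⟨u, hspan u⟩ ⟨v, hspan v⟩
    have huniq : p₂ = w.bypass :=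
      (htree.existsUnique_path _ _).unique hp₂ w.bypass_isPath
    have : p₂.length ≤ T.coe.dist ⟨u, hspan u⟩ ⟨v, hspan v⟩ := by
      rw [huniq, ← hw]; exact w.length_bypass_le
    have htri : T.coe.dist ⟨u, hspan u⟩ ⟨v, hspan v⟩ ≤ 2 * h := by
      calc T.coe.dist ⟨u, hspan u⟩ ⟨v, hspan v⟩
          ≤ T.coe.dist ⟨u, hspan u⟩ ⟨r, hspan r⟩ + T.coe.dist ⟨r, hspan r⟩ ⟨v, hspan v⟩ :=
            htree.isConnected.dist_triangle
        _ ≤ h + h := by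
            rw [SimpleGraph.dist_comm]
            exact Nat.add_le_add (hheight u) (hheight v)
        _ = 2 * h := by ring
    omega
  -- decomposition at first non-tree edge
  have split : ∀ (u v : V) (p : G.Walk u v), (¬ ∀ e ∈ p.edges, e ∈ T.edgeSet) →
      ∃ (a b : V) (hab : G.Adj a b) (p₁ : G.Walk u a) (p₂ : G.Walk b v),
        p = p₁.append (SimpleGraph.Walk.cons hab p₂) ∧
        (∀ e ∈ p₁.edges, e ∈ T.edgeSet) ∧ s(a, b) ∉ T.edgeSet := by
    intro u v p
    induction p with
    | nil => intro hcon; exact absurd (by simp) hcon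
    | @cons x y z hadj p ih =>
      intro hcon
      by_cases hxy : s(x, y) ∈ T.edgeSet
      · have hcon' : ¬ ∀ e ∈ p.edges, e ∈ T.edgeSet := by
          intro hall
          refine hcon ?_
          intro e he
          rw [SimpleGraph.Walk.edges_cons] at he
          rcases List.mem_cons.1 he with rfl | he'
          · exact hxy
          · exact hall e he'
        obtain ⟨a, b, hab, p₁, p₂, heq, h₁, h₂⟩ := ih hcon'
        refine ⟨a, b, hab, SimpleGraph.Walk.cons hadj p₁, p₂, ?_, ?_, h₂⟩
        · rw [SimpleGraph.Walk.cons_append, heq]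
        · intro e he
          rw [SimpleGraph.Walk.edges_cons] at he
          rcases List.mem_cons.1 he with rfl | he'
          · exact hxy
          · exact h₁ e he'
      · exact ⟨x, y, hadj, SimpleGraph.Walk.nil, p, by simp, by simp, hxy⟩
  -- main recursion
  have main : ∀ (N : ℕ) (u v : V) (p : G.Walk u v), p.length ≤ N → p.IsPath →
      p.length ≤ 2 * h * ((p.edges.filter (fun e => e ∉ T.edgeSet)).length + 1) +
        (p.edges.filter (fun e => e ∉ T.edgeSet)).length := by
    intro N
    induction N with
    | zero => intro u v p hl hp; exact le_trans hl (Nat.zero_le _)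
    | succ N ih =>
      intro u v p hl hp
      by_cases hall : ∀ e ∈ p.edges, e ∈ T.edgeSet
      · have h0 : p.edges.filter (fun e => e ∉ T.edgeSet) = [] := by
          rw [List.filter_eq_nil_iff]
          intro e he
          simpa using hall e he
        rw [h0]
        simpa using treeBound u v p hp hall
      · obtain ⟨a, b, hab, p₁, p₂, heq, h₁, h₂⟩ := split u v p hall
        subst heq
        have hp₁ : p₁.IsPath := hp.of_append_left
        have hp₂ : p₂.IsPath := hp.of_append_right.of_cons
        have hL : (p₁.append (SimpleGraph.Walk.cons hab p₂)).length
            = p₁.length + p₂.length + 1 := by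
          simp [SimpleGraph.Walk.length_append]; omega
        have hfil : ((p₁.append (SimpleGraph.Walk.cons hab p₂)).edges.filter
            (fun e => e ∉ T.edgeSet)).length
            = (p₂.edges.filter (fun e => e ∉ T.edgeSet)).length + 1 := by
          rw [SimpleGraph.Walk.edges_append, SimpleGraph.Walk.edges_cons,
            List.filter_append]
          have hnil : p₁.edges.filter (fun e => e ∉ T.edgeSet) = [] := by
            rw [List.filter_eq_nil_iff]
            intro e he
            simpa using h₁ e he
          rw [hnil, List.filter_cons_of_pos (by simpa using h₂)]
          simp
        have hL₁ : p₁.length ≤ 2 * h := treeBound _ _ p₁ hp₁ h₁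
        have hl₂ : p₂.length ≤ N := by omega
        have hIH := ih _ _ p₂ hl₂ hp₂
        rw [hL, hfil]
        set c := (p₂.edges.filter (fun e => e ∉ T.edgeSet)).length with hc
        calc p₁.length + p₂.length + 1
            ≤ 2 * h + (2 * h * (c + 1) + c) + 1 := by omega
          _ = 2 * h * (c + 1 + 1) + (c + 1) := by ring
  intro u v p hp
  have hb := main p.length u v p le_rfl hp
  -- bound the number of non-tree edges by q
  have hcq : (p.edges.filter (fun e => e ∉ T.edgeSet)).length ≤ q := by
    set l := p.edges.filter (fun e => e ∉ T.edgeSet) with hl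
    have hnd : l.Nodup := hp.isTrail.edges_nodup.filter _
    have hsub : ∀ e ∈ l, e ∈ G.edgeSet \ T.edgeSet := by
      intro e he
      rcases List.mem_filter.1 he with ⟨h1, h2⟩
      exact ⟨p.edges_subset_edgeSet h1, by simpa using h2⟩
    have hfin : (G.edgeSet \ T.edgeSet).Finite := Set.toFinite _
    have hGcard : G.edgeSet.ncard = Fintype.card V - 1 + q := by
      rw [Set.ncard_eq_toFinset_card _ (Set.toFinite G.edgeSet)]
      exact hq
    have hvcard : Fintype.card ↥T.verts = Fintype.card V :=
      Fintype.card_congr (Equiv.subtypeUnivEquiv hspan)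
    have hTcard : T.edgeSet.ncard = Fintype.card V - 1 := by
      have h1 : T.coe.edgeFinset.card + 1 = Fintype.card ↥T.verts :=
        htree.card_edgeFinset
      have h2 : T.coe.edgeSet.ncard = T.coe.edgeFinset.card := by
        have h2' := Set.ncard_coe_finset T.coe.edgeFinset
        rwa [SimpleGraph.coe_edgeFinset] at h2'
      have h3 : T.edgeSet.ncard = T.coe.edgeSet.ncard := by
        rw [← T.image_coe_edgeSet_coe]
        exact Set.ncard_image_of_injective _ (Sym2.map.injective Subtype.val_injective)
      omega
    have hpos : 1 ≤ Fintype.card V := Fintype.card_pos_iff.mpr ⟨r⟩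
    have hdiff : (G.edgeSet \ T.edgeSet).ncard = q := by
      rw [Set.ncard_diff T.edgeSet_subset (Set.toFinite _)]
      omega
    calc l.length = l.toFinset.card := (List.toFinset_card_of_nodup hnd).symm
      _ ≤ hfin.toFinset.card := by
          apply Finset.card_le_card
          intro e he
          rw [Set.Finite.mem_toFinset]
          exact hsub e (List.mem_toFinset.1 he)
      _ = (G.edgeSet \ T.edgeSet).ncard := (Set.ncard_eq_toFinset_card _ hfin).symm
      _ = q := hdiff
  have hmon : 2 * h * ((p.edges.filter (fun e => e ∉ T.edgeSet)).length + 1) +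
      (p.edges.filter (fun e => e ∉ T.edgeSet)).length ≤ 2 * h * (q + 1) + q :=
    Nat.add_le_add (Nat.mul_le_mul_left _ (by omega)) hcq
  omega
end

section
/- Let X_1, ..., X_n be independent random variables with |X_i| ≤ M almost surely and finite variances. Then for every x > 0, P(|Σ_{i=1}^n (X_i - E[X_i])| ≥ x) ≤ 2 exp( -(x²/2) / (Σ_{i=1}^n E[X_i²] + Mx/3) ). -/
open MeasureTheory ProbabilityTheory

open Real

lemma fact_ge : ∀ n : ℕ, 2 * 3 ^ n ≤ Nat.factorial (n + 2) := by
  intro n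
  induction n with
  | zero => norm_num [Nat.factorial]
  | succ k ih =>
    rw [pow_succ, Nat.factorial_succ]
    calc 2 * (3 ^ k * 3) = 3 * (2 * 3 ^ k) := by ring
    _ ≤ (k + 2 + 1) * Nat.factorial (k + 2) := by
        exact Nat.mul_le_mul (by omega) ih

lemma exp_le_aux {u c : ℝ} (hu : |u| ≤ c) (hc : c < 3) :
    Real.exp u ≤ 1 + u + u ^ 2 / (2 * (1 - c / 3)) := by
  have hc0 : 0 ≤ c := le_trans (abs_nonneg u) hu
  have hf : Summable (fun n : ℕ => u ^ n / n.factorial) := Real.summable_pow_div_factorial u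
  have hexp : Real.exp u = ∑' n : ℕ, u ^ n / n.factorial := by
    rw [Real.exp_eq_exp_ℝ, NormedSpace.exp_eq_tsum_div]
  have hsplit := hf.sum_add_tsum_nat_add 2
  have hrange : ∑ i ∈ Finset.range 2, u ^ i / (Nat.factorial i : ℝ) = 1 + u := by
    simp [Finset.sum_range_succ, Nat.factorial]
  rw [hexp, ← hsplit, hrange]
  have hterm : ∀ n : ℕ, u ^ (n + 2) / (Nat.factorial (n + 2) : ℝ) ≤
      u ^ 2 / 2 * (c / 3) ^ n := by
    intro n
    have h1 : u ^ (n + 2) / (Nat.factorial (n + 2) : ℝ) ≤ |u| ^ (n + 2) / (2 * 3 ^ n) := by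
      refine le_trans (le_abs_self _) ?_
      rw [abs_div, abs_pow, abs_of_nonneg (by positivity : (0:ℝ) ≤ (Nat.factorial (n+2) : ℝ))]
      apply div_le_div_of_nonneg_left (by positivity) (by positivity)
      exact_mod_cast fact_ge n
    refine h1.trans ?_
    have : |u| ^ (n + 2) ≤ u ^ 2 * c ^ n := by
      rw [pow_add, sq_abs, mul_comm]
      exact mul_le_mul_of_nonneg_left (pow_le_pow_left₀ (abs_nonneg u) hu n) (by positivity)
    calc |u| ^ (n + 2) / (2 * 3 ^ n) ≤ u ^ 2 * c ^ n / (2 * 3 ^ n) := by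
          apply div_le_div_of_nonneg_right this (by positivity)
    _ = u ^ 2 / 2 * (c / 3) ^ n := by rw [div_pow]; ring
  have hg : Summable (fun n : ℕ => u ^ 2 / 2 * (c / 3) ^ n) := by
    apply Summable.mul_left
    exact summable_geometric_of_lt_one (by positivity) (by linarith)
  have hle : ∑' n : ℕ, u ^ (n + 2) / (Nat.factorial (n + 2) : ℝ) ≤
      ∑' n : ℕ, u ^ 2 / 2 * (c / 3) ^ n := by
    exact Summable.tsum_le_tsum hterm ((summable_nat_add_iff 2).2 hf) hg
  have hgeo : ∑' n : ℕ, u ^ 2 / 2 * (c / 3) ^ n = u ^ 2 / (2 * (1 - c / 3)) := by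
    rw [tsum_mul_left, tsum_geometric_of_lt_one (by positivity) (by linarith)]
    field_simp
  linarith [hle.trans_eq hgeo]

lemma integrable_of_bdd {Ω : Type*} [MeasurableSpace Ω] {μ : Measure Ω} [IsFiniteMeasure μ]
    {Y : Ω → ℝ} {C : ℝ} (hY : Measurable Y) (hb : ∀ᵐ ω ∂μ, |Y ω| ≤ C) :
    Integrable Y μ :=
  ⟨hY.aestronglyMeasurable, HasFiniteIntegral.of_bounded (C := C) (by simpa using hb)⟩

lemma mgf_centered_le {Ω : Type*} [MeasurableSpace Ω] (μ : Measure Ω) [IsProbabilityMeasure μ]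
    (Y : Ω → ℝ) (M : ℝ) (hY : Measurable Y) (hb : ∀ᵐ ω ∂μ, |Y ω| ≤ M)
    (t : ℝ) (ht : 0 ≤ t) (htM : t * M < 3) :
    mgf (fun ω => Y ω - ∫ ω', Y ω' ∂μ) μ t ≤
      Real.exp (t ^ 2 * (∫ ω', Y ω' ^ 2 ∂μ) / (2 * (1 - t * M / 3))) := by
  set m := ∫ ω', Y ω' ∂μ with hm
  set D : ℝ := 2 * (1 - t * M / 3) with hD
  have hd : 0 < 1 - t * M / 3 := by linarith
  have hD0 : 0 < D := by positivity
  have intY : Integrable Y μ := integrable_of_bdd hY hb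
  have intY2 : Integrable (fun ω => Y ω ^ 2) μ := by
    refine integrable_of_bdd (C := M ^ 2) (hY.pow_const 2) ?_
    filter_upwards [hb] with ω hω
    rw [abs_pow]
    exact pow_le_pow_left₀ (abs_nonneg _) hω 2
  have intExp : Integrable (fun ω => Real.exp (t * Y ω)) μ := by
    refine integrable_of_bdd (C := Real.exp (t * M)) ((hY.const_mul t).exp) ?_
    filter_upwards [hb] with ω hω
    rw [abs_of_pos (Real.exp_pos _)]
    exact Real.exp_le_exp.2 (mul_le_mul_of_nonneg_left ((abs_le.1 hω).2) ht)
  have hpt : ∀ᵐ ω ∂μ, Real.exp (t * Y ω) ≤ 1 + t * Y ω + t ^ 2 / D * Y ω ^ 2 := by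
    filter_upwards [hb] with ω hω
    have h1 : |t * Y ω| ≤ t * M := by
      rw [abs_mul, abs_of_nonneg ht]
      exact mul_le_mul_of_nonneg_left hω ht
    have := exp_le_aux h1 htM
    calc Real.exp (t * Y ω) ≤ 1 + t * Y ω + (t * Y ω) ^ 2 / D := this
    _ = 1 + t * Y ω + t ^ 2 / D * Y ω ^ 2 := by ring
  have hRHSint : Integrable (fun ω => 1 + t * Y ω + t ^ 2 / D * Y ω ^ 2) μ :=
    ((integrable_const 1).add (intY.const_mul t)).add (intY2.const_mul _)
  have hint : ∫ ω, Real.exp (t * Y ω) ∂μ ≤ 1 + t * m + t ^ 2 / D * ∫ ω, Y ω ^ 2 ∂μ := by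
    calc ∫ ω, Real.exp (t * Y ω) ∂μ ≤ ∫ ω, (1 + t * Y ω + t ^ 2 / D * Y ω ^ 2) ∂μ :=
        integral_mono_ae intExp hRHSint hpt
    _ = 1 + t * m + t ^ 2 / D * ∫ ω, Y ω ^ 2 ∂μ := by
        have i1 : Integrable (fun ω => 1 + t * Y ω) μ := (integrable_const 1).add (intY.const_mul t)
        have i2 : Integrable (fun ω => t ^ 2 / D * Y ω ^ 2) μ := intY2.const_mul _
        have ic : Integrable (fun _ : Ω => (1 : ℝ)) μ := integrable_const 1
        rw [integral_add i1 i2, integral_add ic (intY.const_mul t),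
          integral_const_mul, integral_const_mul]
        simp [hm]
  have hmgf : mgf (fun ω => Y ω - m) μ t = (∫ ω, Real.exp (t * Y ω) ∂μ) * (Real.exp (t * m))⁻¹ := by
    unfold mgf
    simp_rw [mul_sub, Real.exp_sub, div_eq_mul_inv]
    rw [integral_mul_const]
  rw [hmgf]
  set A : ℝ := t ^ 2 * (∫ ω', Y ω' ^ 2 ∂μ) / D with hA
  have hA' : t ^ 2 / D * ∫ ω, Y ω ^ 2 ∂μ = A := by rw [hA]; ring
  have h1 : (1 : ℝ) + t * m + A ≤ Real.exp (t * m + A) := by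
    have := Real.add_one_le_exp (t * m + A)
    linarith
  have hexp : Real.exp (t * m + A) = Real.exp (t * m) * Real.exp A := Real.exp_add _ _
  have hepos : (0:ℝ) < Real.exp (t * m) := Real.exp_pos _
  rw [hA'] at hint
  calc (∫ ω, Real.exp (t * Y ω) ∂μ) * (Real.exp (t * m))⁻¹
      ≤ (1 + t * m + A) * (Real.exp (t * m))⁻¹ := by
        apply mul_le_mul_of_nonneg_right hint (by positivity)
    _ ≤ Real.exp (t * m + A) * (Real.exp (t * m))⁻¹ := by
        apply mul_le_mul_of_nonneg_right h1 (by positivity)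
    _ = Real.exp A := by rw [hexp]; field_simp

lemma bernstein_upper {Ω : Type*} [MeasurableSpace Ω] (μ : Measure Ω) [IsProbabilityMeasure μ]
    (n : ℕ) (X : Fin n → Ω → ℝ) (M : ℝ) (hM : 0 < M)
    (hmeas : ∀ i, Measurable (X i))
    (hindep : iIndepFun X μ)
    (hbdd : ∀ i, ∀ᵐ ω ∂μ, |X i ω| ≤ M)
    (x : ℝ) (hx : 0 < x)
    (hσ : 0 < ∑ i, ∫ ω', X i ω' ^ 2 ∂μ) :
    (μ {ω | x ≤ ∑ i, (X i ω - ∫ ω', X i ω' ∂μ)}).toReal ≤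
      Real.exp (-(x ^ 2 / 2) / ((∑ i, ∫ ω', X i ω' ^ 2 ∂μ) + M * x / 3)) := by
  set σ2 : ℝ := ∑ i, ∫ ω', X i ω' ^ 2 ∂μ with hσ2
  set Dd : ℝ := σ2 + M * x / 3 with hDd
  have hDd0 : 0 < Dd := by positivity
  set t : ℝ := x / Dd with htdef
  have ht0 : 0 < t := by positivity
  have htM : t * M < 3 := by
    rw [htdef, div_mul_eq_mul_div, div_lt_iff₀ hDd0, hDd]
    nlinarith
  have hd : 0 < 1 - t * M / 3 := by linarith
  set Y : Fin n → Ω → ℝ := fun i ω => X i ω - ∫ ω', X i ω' ∂μ with hY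
  have hYmeas : ∀ i, Measurable (Y i) := fun i => (hmeas i).sub_const _
  have hYindep : iIndepFun Y μ :=
    hindep.comp (fun i => (· - ∫ ω', X i ω' ∂μ)) (fun i => measurable_id.sub_const _)
  have hmB : ∀ i, |∫ ω', X i ω' ∂μ| ≤ M := by
    intro i
    calc |∫ ω', X i ω' ∂μ| ≤ ∫ ω', |X i ω'| ∂μ := by
          simpa [Real.norm_eq_abs] using norm_integral_le_integral_norm (μ := μ) (f := X i)
    _ ≤ ∫ _ω', M ∂μ := integral_mono_ae
          ((integrable_of_bdd (hmeas i) (hbdd i)).abs) (integrable_const M)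
          ((hbdd i).mono fun ω h => h)
    _ = M := by simp
  have hYbdd : ∀ i, ∀ᵐ ω ∂μ, |Y i ω| ≤ 2 * M := by
    intro i
    filter_upwards [hbdd i] with ω hω
    calc |Y i ω| ≤ |X i ω| + |∫ ω', X i ω' ∂μ| := abs_sub _ _
    _ ≤ M + M := add_le_add hω (hmB i)
    _ = 2 * M := by ring
  have hintExp : ∀ i, Integrable (fun ω => Real.exp (t * Y i ω)) μ := by
    intro i
    refine integrable_of_bdd (C := Real.exp (t * (2 * M))) ((hYmeas i).const_mul t).exp ?_
    filter_upwards [hYbdd i] with ω hω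
    rw [abs_of_pos (Real.exp_pos _)]
    exact Real.exp_le_exp.2 (mul_le_mul_of_nonneg_left ((abs_le.1 hω).2) ht0.le)
  have hintExpSum : Integrable (fun ω => Real.exp (t * (∑ i, Y i) ω)) μ :=
    hYindep.integrable_exp_mul_sum hYmeas (fun i _ => hintExp i)
  have chernoff := measure_ge_le_exp_mul_mgf (X := ∑ i, Y i) (μ := μ) (t := t) x ht0.le hintExpSum
  have hmgfsum : mgf (∑ i, Y i) μ t = ∏ i, mgf (Y i) μ t :=
    hYindep.mgf_sum hYmeas Finset.univ
  have hmgfi : ∀ i, mgf (Y i) μ t ≤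
      Real.exp (t ^ 2 * (∫ ω', X i ω' ^ 2 ∂μ) / (2 * (1 - t * M / 3))) := fun i =>
    mgf_centered_le μ (X i) M (hmeas i) (hbdd i) t ht0.le htM
  have hprod : ∏ i, mgf (Y i) μ t ≤
      Real.exp (t ^ 2 * σ2 / (2 * (1 - t * M / 3))) := by
    calc ∏ i, mgf (Y i) μ t
        ≤ ∏ i, Real.exp (t ^ 2 * (∫ ω', X i ω' ^ 2 ∂μ) / (2 * (1 - t * M / 3))) :=
          Finset.prod_le_prod (fun i _ => mgf_nonneg) (fun i _ => hmgfi i)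
    _ = Real.exp (∑ i, t ^ 2 * (∫ ω', X i ω' ^ 2 ∂μ) / (2 * (1 - t * M / 3))) :=
          (Real.exp_sum _ _).symm
    _ = Real.exp (t ^ 2 * σ2 / (2 * (1 - t * M / 3))) := by
          rw [hσ2, Finset.mul_sum, Finset.sum_div]
  have hset : {ω | x ≤ ∑ i, (X i ω - ∫ ω', X i ω' ∂μ)} = {ω | x ≤ (∑ i, Y i) ω} := by
    ext ω; simp [hY, Finset.sum_apply]
  have hkey : Real.exp (-t * x) * Real.exp (t ^ 2 * σ2 / (2 * (1 - t * M / 3))) =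
      Real.exp (-(x ^ 2 / 2) / Dd) := by
    rw [← Real.exp_add]
    congr 1
    have h1 : 1 - t * M / 3 = σ2 / Dd := by
      rw [htdef]; field_simp; ring
    rw [h1, htdef]
    field_simp
    ring
  calc (μ {ω | x ≤ ∑ i, (X i ω - ∫ ω', X i ω' ∂μ)}).toReal
      = (μ {ω | x ≤ (∑ i, Y i) ω}).toReal := by rw [hset]
  _ ≤ Real.exp (-t * x) * mgf (∑ i, Y i) μ t := chernoff
  _ ≤ Real.exp (-t * x) * Real.exp (t ^ 2 * σ2 / (2 * (1 - t * M / 3))) := by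
      apply mul_le_mul_of_nonneg_left (hmgfsum ▸ hprod) (Real.exp_pos _).le
  _ = Real.exp (-(x ^ 2 / 2) / Dd) := hkey

/-- Bernstein's inequality for independent bounded random variables. -/
theorem stmt_5 {Ω : Type*} [MeasurableSpace Ω] (μ : Measure Ω) [IsProbabilityMeasure μ]
    (n : ℕ) (X : Fin n → Ω → ℝ) (M : ℝ) (hM : 0 < M)
    (hmeas : ∀ i, Measurable (X i))
    (hindep : iIndepFun X μ)
    (hbdd : ∀ i, ∀ᵐ ω ∂μ, |X i ω| ≤ M) :
    ∀ x : ℝ, 0 < x →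
      μ {ω | x ≤ |∑ i, (X i ω - ∫ ω', X i ω' ∂μ)|} ≤
        ENNReal.ofReal (2 * Real.exp (-(x ^ 2 / 2) /
          ((∑ i, ∫ ω', X i ω' ^ 2 ∂μ) + M * x / 3))) := by
  intro x hx
  have hσnn : (0:ℝ) ≤ ∑ i, ∫ ω', X i ω' ^ 2 ∂μ :=
    Finset.sum_nonneg fun i _ => integral_nonneg fun ω => sq_nonneg _
  rcases hσnn.eq_or_lt with h0 | hσpos
  · -- degenerate case: all X i vanish a.e.
    have hzero : ∀ i, X i =ᵐ[μ] 0 := by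
      intro i
      have hi : ∫ ω', X i ω' ^ 2 ∂μ = 0 :=
        (Finset.sum_eq_zero_iff_of_nonneg
          (fun i _ => integral_nonneg fun ω => sq_nonneg _)).1 h0.symm i (Finset.mem_univ i)
      have hint2 : Integrable (fun ω => X i ω ^ 2) μ := by
        refine integrable_of_bdd (C := M ^ 2) ((hmeas i).pow_const 2) ?_
        filter_upwards [hbdd i] with ω hω
        rw [abs_pow]
        exact pow_le_pow_left₀ (abs_nonneg _) hω 2
      have hsq := (integral_eq_zero_iff_of_nonneg_ae
        (Filter.Eventually.of_forall fun ω => sq_nonneg (X i ω)) hint2).1 hi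
      filter_upwards [hsq] with ω hω
      exact pow_eq_zero_iff (two_ne_zero).elim |>.mp hω
    have hm0 : ∀ i, ∫ ω', X i ω' ∂μ = 0 := fun i => by
      rw [integral_congr_ae (hzero i)]; simp
    have hnull : μ {ω | x ≤ |∑ i, (X i ω - ∫ ω', X i ω' ∂μ)|} = 0 := by
      rw [measure_eq_zero_iff_ae_notMem]
      filter_upwards [MeasureTheory.ae_all_iff.2 hzero] with ω hω
      simp only [Set.mem_setOf_eq, not_le]
      have : ∑ i, (X i ω - ∫ ω', X i ω' ∂μ) = 0 := by
        apply Finset.sum_eq_zero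
        intro i _
        rw [hm0 i, hω i]
        simp
      rw [this, abs_zero]
      exact hx
    rw [hnull]
    exact zero_le
  · set σ2 : ℝ := ∑ i, ∫ ω', X i ω' ^ 2 ∂μ with hσ2
    set e : ℝ := Real.exp (-(x ^ 2 / 2) / (σ2 + M * x / 3)) with he
    have hup := bernstein_upper μ n X M hM hmeas hindep hbdd x hx hσpos
    have hnmeas : ∀ i, Measurable (fun ω => -X i ω) := fun i => (hmeas i).neg
    have hnindep : iIndepFun (fun i ω => -X i ω) μ :=
      hindep.comp (fun _ y => -y) (fun _ => measurable_neg)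
    have hnbdd : ∀ i, ∀ᵐ ω ∂μ, |(-X i ω)| ≤ M := fun i => by
      filter_upwards [hbdd i] with ω hω; rwa [abs_neg]
    have hnσ : (∑ i, ∫ ω', (-X i ω') ^ 2 ∂μ) = σ2 := by
      simp [neg_sq, hσ2]
    have hdown := bernstein_upper μ n (fun i ω => -X i ω) M hM hnmeas hnindep hnbdd x hx
      (by rw [hnσ]; exact hσpos)
    rw [hnσ] at hdown
    have hsumneg : ∀ ω, ∑ i, (-X i ω - ∫ ω', -X i ω' ∂μ) =
        -∑ i, (X i ω - ∫ ω', X i ω' ∂μ) := by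
      intro ω
      rw [← Finset.sum_neg_distrib]
      refine Finset.sum_congr rfl fun i _ => ?_
      rw [integral_neg]
      ring
    have hdown' : (μ {ω | x ≤ -∑ i, (X i ω - ∫ ω', X i ω' ∂μ)}).toReal ≤ e := by
      have : {ω | x ≤ ∑ i, (-X i ω - ∫ ω', -X i ω' ∂μ)} =
          {ω | x ≤ -∑ i, (X i ω - ∫ ω', X i ω' ∂μ)} := by
        ext ω; rw [Set.mem_setOf_eq, Set.mem_setOf_eq, hsumneg ω]
      rwa [this] at hdown
    set S : Ω → ℝ := fun ω => ∑ i, (X i ω - ∫ ω', X i ω' ∂μ) with hS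
    have hsub : {ω | x ≤ |S ω|} ⊆ {ω | x ≤ S ω} ∪ {ω | x ≤ -S ω} := by
      intro ω hω
      simp only [Set.mem_setOf_eq] at hω ⊢
      rcases le_abs.1 hω with h | h
      · exact Or.inl h
      · exact Or.inr h
    rw [ENNReal.le_ofReal_iff_toReal_le (measure_ne_top μ _) (by positivity)]
    calc (μ {ω | x ≤ |S ω|}).toReal
        ≤ (μ ({ω | x ≤ S ω} ∪ {ω | x ≤ -S ω})).toReal :=
          ENNReal.toReal_mono (measure_ne_top μ _) (measure_mono hsub)
      _ ≤ (μ {ω | x ≤ S ω}).toReal + (μ {ω | x ≤ -S ω}).toReal := by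
          rw [← ENNReal.toReal_add (measure_ne_top μ _) (measure_ne_top μ _)]
          exact ENNReal.toReal_mono (by finiteness) (measure_union_le _ _)
      _ ≤ e + e := add_le_add hup hdown'
      _ = 2 * e := by ring
end
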